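/- Let (R,μ) be a non-atomic measure space with 0 < μ(R) < ∞, and let p ∈ (0,1) and q ∈ (0,∞]. Then the almost-compact embedding L^1 ↪* L^{p,q} holds, where L^1 is the Lebesgue space with norm ‖f‖_1 = ∫_R |f| dμ. -/

import Mathlib

open MeasureTheory Filter Set ENNReal

noncomputable section

/-- A Young function: a convex, non-decreasing, left-continuous function
`A : [0,∞] → [0,∞]` with `A(0) = 0`, `A(0+) = 0` and `A(∞) = ∞`. -/
structure YoungFunction where
  toFun : ℝ≥0∞ → ℝ≥0∞
  map_zero : toFun 0 = 0
  tendsto_zero : Filter.Tendsto toFun (nhdsWithin 0 (Set.Ioi 0)) (nhds 0)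
  mono : Monotone toFun
  convex' : ∀ s t c : ℝ≥0∞, c ≤ 1 →
    toFun (c * s + (1 - c) * t) ≤ c * toFun s + (1 - c) * toFun t
  left_continuous : ∀ t : ℝ≥0∞, 0 < t → toFun t = ⨆ s ∈ Set.Iio t, toFun s
  map_top : toFun ⊤ = ⊤

/-- Left-continuous inverse of a non-decreasing function `F : [0,∞] → [0,∞]`:
`F⁻¹(t) = inf {τ ≥ 0 : F(τ) ≥ t}`. -/
def leftInvE (F : ℝ≥0∞ → ℝ≥0∞) (t : ℝ≥0∞) : ℝ≥0∞ :=
  sInf {τ : ℝ≥0∞ | t ≤ F τ}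

/-- `a` is the right-continuous derivative of the Young function `A`:
`a` is non-decreasing, right-continuous, `a(∞) = ∞`, and
`A(t) = ∫₀ᵗ a(s) ds` for all finite `t ≥ 0`. -/
def IsYoungDerivative (A : YoungFunction) (a : ℝ≥0∞ → ℝ≥0∞) : Prop :=
  Monotone a ∧ a ⊤ = ⊤ ∧
    (∀ t : ℝ≥0∞, t ≠ ⊤ → Filter.Tendsto a (nhdsWithin t (Set.Ioi t)) (nhds (a t))) ∧
    ∀ t : ℝ, 0 ≤ t →
      A.toFun (ENNReal.ofReal t) = ∫⁻ s in Set.Ioc (0:ℝ) t, a (ENNReal.ofReal s)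

/-- The Young conjugate `B̃(t) = sup {s·t − B(s) : s ∈ [0,∞]}`. -/
def youngConj (A : YoungFunction) (t : ℝ≥0∞) : ℝ≥0∞ :=
  ⨆ s : ℝ≥0∞, s * t - A.toFun s

variable {R : Type*} [MeasurableSpace R]

/-- The distribution function `f₊(λ) = μ({x : |f(x)| > λ})`. -/
def distFn (μ : Measure R) (f : R → ℝ) (lam : ℝ≥0∞) : ℝ≥0∞ :=
  μ {x | lam < ENNReal.ofReal |f x|}

/-- The non-increasing rearrangement `f*(t) = inf {λ ≥ 0 : f₊(λ) ≤ t}`. -/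
def rearr (μ : Measure R) (f : R → ℝ) (t : ℝ≥0∞) : ℝ≥0∞ :=
  sInf {lam : ℝ≥0∞ | distFn μ f lam ≤ t}

/-- The Lorentz functional `‖f‖_{p,q}` for `p, q ∈ (0,∞]`. -/
def lorentzNorm (μ : Measure R) (p q : ℝ≥0∞) (f : R → ℝ) : ℝ≥0∞ :=
  if q = ⊤ then
    ⨆ t : Set.Ioi (0:ℝ), ENNReal.ofReal t.1 ^ (p⁻¹).toReal * rearr μ f (ENNReal.ofReal t.1)
  else
    (∫⁻ t in Set.Ioi (0:ℝ),
        (ENNReal.ofReal t ^ (p⁻¹).toReal * rearr μ f (ENNReal.ofReal t)) ^ q.toReal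
          / ENNReal.ofReal t) ^ (q⁻¹).toReal

/-- The Luxemburg norm `‖f‖_A = inf {λ > 0 : ∫ A(|f|/λ) dμ ≤ 1}`. -/
def luxNorm (μ : Measure R) (A : YoungFunction) (f : R → ℝ) : ℝ≥0∞ :=
  sInf {lam : ℝ≥0∞ | 0 < lam ∧ ∫⁻ x, A.toFun (ENNReal.ofReal |f x| / lam) ∂μ ≤ 1}

/-- The measure `μ` is non-atomic: every set of positive measure has a subset
of strictly smaller positive measure. -/
def NonAtomic (μ : Measure R) : Prop :=
  ∀ s : Set R, MeasurableSet s → 0 < μ s →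
    ∃ t, t ⊆ s ∧ MeasurableSet t ∧ 0 < μ t ∧ μ t < μ s

/-- The almost-compact embedding `X ↪* Y`, for (quasi)norm functionals `NX`, `NY`:
`X ⊂ Y` and for every sequence of measurable sets `Eₙ` whose characteristic
functions tend to `0` a.e., `sup_{‖f‖_X ≤ 1} ‖f χ_{Eₙ}‖_Y → 0`. -/
def AlmostCompactEmbedding (μ : Measure R) (NX NY : (R → ℝ) → ℝ≥0∞) : Prop :=
  (∀ f : R → ℝ, Measurable f → NX f < ⊤ → NY f < ⊤) ∧
    ∀ E : ℕ → Set R, (∀ n, MeasurableSet (E n)) →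
      (∀ᵐ x ∂μ, Filter.Tendsto (fun n => (E n).indicator (fun _ => (1:ℝ)) x)
        Filter.atTop (nhds 0)) →
      Filter.Tendsto
        (fun n => ⨆ f : {f : R → ℝ // Measurable f ∧ NX f ≤ 1},
          NY ((E n).indicator f.1)) Filter.atTop (nhds 0)

/-- The continuous embedding `X ↪ Y`: there is `C > 0` with `‖f‖_Y ≤ C ‖f‖_X`. -/
def NormEmbedding (μ : Measure R) (NX NY : (R → ℝ) → ℝ≥0∞) : Prop :=
  ∃ C : ℝ, 0 < C ∧ ∀ f : R → ℝ, Measurable f → NY f ≤ ENNReal.ofReal C * NX f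

section Aux

variable {R : Type*} [MeasurableSpace R]

lemma rearr_le_div (μ : Measure R) {f : R → ℝ} (hf : Measurable f) {N t : ℝ≥0∞}
    (hN : (∫⁻ x, ENNReal.ofReal |f x| ∂μ) ≤ N) (ht0 : t ≠ 0) :
    rearr μ f t ≤ N / t := by
  apply sInf_le
  show distFn μ f (N / t) ≤ t
  by_cases htop : N / t = ⊤
  · rw [htop]
    have : {x | (⊤ : ℝ≥0∞) < ENNReal.ofReal |f x|} = ∅ := by
      ext x; simp [(ENNReal.ofReal_lt_top).not_gt]
    simp [distFn, this]
  by_cases hN0 : N = 0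
  · have hzero : (∫⁻ x, ENNReal.ofReal |f x| ∂μ) = 0 := le_antisymm (hN0 ▸ hN) zero_le
    have hae : ∀ᵐ x ∂μ, ENNReal.ofReal |f x| = 0 :=
      (lintegral_eq_zero_iff (by fun_prop)).mp hzero
    have h0 : μ {x | 0 < ENNReal.ofReal |f x|} = 0 := by
      refine measure_mono_null (fun x hx => ?_) (ae_iff.mp hae)
      simp only [Set.mem_setOf_eq] at hx ⊢
      exact hx.ne'
    have : N / t = 0 := by simp [hN0]
    rw [this]
    simpa [distFn] using le_trans (le_of_eq h0) (zero_le : 0 ≤ t)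
  by_cases httop : t = ⊤
  · exact httop ▸ le_top
  -- main case
  set lam := N / t with hlam
  have hlam0 : lam ≠ 0 := by
    simp only [hlam, ne_eq, ENNReal.div_eq_zero_iff]
    push_neg
    exact ⟨hN0, httop⟩
  have key : lam * μ {x | lam ≤ ENNReal.ofReal |f x|} ≤ N :=
    le_trans (mul_meas_ge_le_lintegral₀ (by fun_prop) lam) hN
  have hsub : {x | lam < ENNReal.ofReal |f x|} ⊆ {x | lam ≤ ENNReal.ofReal |f x|} :=
    fun x hx => le_of_lt (show lam < ENNReal.ofReal |f x| from hx)
  have key2 : lam * distFn μ f lam ≤ lam * t := by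
    calc lam * distFn μ f lam ≤ lam * μ {x | lam ≤ ENNReal.ofReal |f x|} := by
          exact mul_le_mul_right (measure_mono hsub) lam
      _ ≤ N := key
      _ = lam * t := by rw [hlam, ENNReal.div_mul_cancel ht0 httop]
  exact (ENNReal.mul_le_mul_iff_right hlam0 htop).mp key2

lemma rearr_eq_zero (μ : Measure R) {f : R → ℝ} {m t : ℝ≥0∞}
    (hm : ∀ lam, distFn μ f lam ≤ m) (ht : m ≤ t) : rearr μ f t = 0 :=
  le_antisymm (sInf_le (le_trans (hm 0) ht)) zero_le

lemma lorentz_main_bound (μ : Measure R) (p q : ℝ≥0∞)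
    (hp0 : 0 < p) (hp1 : p < 1) (hq : 0 < q) :
    ∃ C : ℝ≥0∞, C ≠ ⊤ ∧ ∀ (f : R → ℝ), Measurable f → ∀ N m : ℝ≥0∞, m ≠ ⊤ →
      (∫⁻ x, ENNReal.ofReal |f x| ∂μ) ≤ N → (∀ lam, distFn μ f lam ≤ m) →
      lorentzNorm μ p q f ≤ C * (N * m ^ ((p⁻¹).toReal - 1)) := by
  set r : ℝ := (p⁻¹).toReal with hrdef
  have hpinv_ne_top : p⁻¹ ≠ ⊤ := by
    simpa [ENNReal.inv_eq_top] using hp0.ne'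
  have hr1 : 1 < r := by
    have h1 : (1 : ℝ≥0∞) < p⁻¹ := ENNReal.one_lt_inv.mpr hp1
    have := (ENNReal.toReal_lt_toReal ENNReal.one_ne_top hpinv_ne_top).mpr h1
    simpa [hrdef, ENNReal.toReal_inv] using this
  -- helper: the pointwise bound x^r * rearr x ≤ N * x^(r-1) for 0 < x < ⊤, and cutoff
  by_cases hqtop : q = ⊤
  · refine ⟨1, one_ne_top, fun f hf N m hm hN hdist => ?_⟩
    rw [one_mul, lorentzNorm, if_pos hqtop]
    refine iSup_le fun t => ?_
    have ht0 : (0:ℝ) < t.1 := t.2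
    set x := ENNReal.ofReal t.1 with hx
    have hx0 : x ≠ 0 := by simpa [hx] using (ENNReal.ofReal_pos.mpr ht0).ne'
    have hxtop : x ≠ ⊤ := ENNReal.ofReal_ne_top
    by_cases hcut : m ≤ x
    · rw [rearr_eq_zero μ hdist hcut, mul_zero]
      exact zero_le
    · push_neg at hcut
      have hrearr : rearr μ f x ≤ N / x := rearr_le_div μ hf hN hx0
      calc x ^ r * rearr μ f x ≤ x ^ r * (N / x) := mul_le_mul_right hrearr _
        _ = N * (x ^ r * x⁻¹) := by rw [div_eq_mul_inv]; ring
        _ = N * x ^ (r - 1) := by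
            congr 1
            rw [show x ^ r = x ^ (r - 1) * x by
              conv_lhs => rw [show r = (r - 1) + 1 by ring]
              rw [ENNReal.rpow_add _ _ hx0 hxtop, ENNReal.rpow_one]]
            rw [mul_assoc, ENNReal.mul_inv_cancel hx0 hxtop, mul_one]
        _ ≤ N * m ^ (r - 1) :=
            mul_le_mul_right (ENNReal.rpow_le_rpow hcut.le (by linarith)) _
  -- q finite case
  set Q : ℝ := q.toReal with hQdef
  have hQ : 0 < Q := ENNReal.toReal_pos hq.ne' hqtop
  set a : ℝ := (r - 1) * Q with hadef
  have ha : 0 < a := mul_pos (by linarith) hQ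
  refine ⟨ENNReal.ofReal (1 / a) ^ Q⁻¹, ENNReal.rpow_ne_top_of_nonneg (by positivity)
    ENNReal.ofReal_ne_top, fun f hf N m hm hN hdist => ?_⟩
  set T : ℝ := m.toReal with hT
  have hT0 : 0 ≤ T := ENNReal.toReal_nonneg
  have hiQ : (q⁻¹).toReal = Q⁻¹ := by rw [ENNReal.toReal_inv]
  rw [lorentzNorm, if_neg hqtop, hiQ]
  -- pointwise bound of the integrand
  have hpt : ∀ t ∈ Set.Ioi (0:ℝ),
      (ENNReal.ofReal t ^ r * rearr μ f (ENNReal.ofReal t)) ^ Q / ENNReal.ofReal t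
        ≤ (Set.Ioc (0:ℝ) T).indicator (fun t => N ^ Q * ENNReal.ofReal t ^ (a - 1)) t := by
    intro t ht
    have ht0 : (0:ℝ) < t := ht
    set x := ENNReal.ofReal t with hx
    have hx0 : x ≠ 0 := by simpa [hx] using (ENNReal.ofReal_pos.mpr ht0).ne'
    have hxtop : x ≠ ⊤ := ENNReal.ofReal_ne_top
    by_cases hcut : T < t
    · have hmx : m ≤ x := by
        rw [hx, ENNReal.le_ofReal_iff_toReal_le hm ht0.le]
        exact hcut.le
      rw [rearr_eq_zero μ hdist hmx, mul_zero, ENNReal.zero_rpow_of_pos hQ,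
        ENNReal.zero_div]
      exact zero_le
    · push_neg at hcut
      rw [Set.indicator_of_mem (Set.mem_Ioc.mpr ⟨ht0, hcut⟩)]
      have hrearr : rearr μ f x ≤ N / x := rearr_le_div μ hf hN hx0
      have step1 : x ^ r * rearr μ f x ≤ N * x ^ (r - 1) := by
        calc x ^ r * rearr μ f x ≤ x ^ r * (N / x) := mul_le_mul_right hrearr _
          _ = N * (x ^ r * x⁻¹) := by rw [div_eq_mul_inv]; ring
          _ = N * x ^ (r - 1) := by
              congr 1
              rw [show x ^ r = x ^ (r - 1) * x by
                conv_lhs => rw [show r = (r - 1) + 1 by ring]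
                rw [ENNReal.rpow_add _ _ hx0 hxtop, ENNReal.rpow_one]]
              rw [mul_assoc, ENNReal.mul_inv_cancel hx0 hxtop, mul_one]
      calc (x ^ r * rearr μ f x) ^ Q / x
          ≤ (N * x ^ (r - 1)) ^ Q / x := by
            gcongr
        _ = N ^ Q * (x ^ ((r-1)*Q) * x⁻¹) := by
            rw [ENNReal.mul_rpow_of_nonneg _ _ hQ.le, ← ENNReal.rpow_mul,
              div_eq_mul_inv, mul_assoc]
        _ = N ^ Q * x ^ (a - 1) := by
            congr 1
            rw [show x ^ ((r-1)*Q) = x ^ (a - 1) * x by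
              conv_lhs => rw [show (r-1)*Q = (a - 1) + 1 by rw [hadef]; ring]
              rw [ENNReal.rpow_add _ _ hx0 hxtop, ENNReal.rpow_one]]
            rw [mul_assoc, ENNReal.mul_inv_cancel hx0 hxtop, mul_one]
  -- integral bound
  have hmeas_ind : MeasurableSet (Set.Ioc (0:ℝ) T) := measurableSet_Ioc
  have hint_le : (∫⁻ t in Set.Ioi (0:ℝ),
      (ENNReal.ofReal t ^ r * rearr μ f (ENNReal.ofReal t)) ^ Q / ENNReal.ofReal t)
        ≤ N ^ Q * ∫⁻ t in Set.Ioc (0:ℝ) T, ENNReal.ofReal t ^ (a - 1) := by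
    calc (∫⁻ t in Set.Ioi (0:ℝ),
        (ENNReal.ofReal t ^ r * rearr μ f (ENNReal.ofReal t)) ^ Q / ENNReal.ofReal t)
        ≤ ∫⁻ t in Set.Ioi (0:ℝ),
            (Set.Ioc (0:ℝ) T).indicator (fun t => N ^ Q * ENNReal.ofReal t ^ (a - 1)) t :=
          setLIntegral_mono_ae' measurableSet_Ioi (ae_of_all _ hpt)
      _ = ∫⁻ t in Set.Ioc (0:ℝ) T ∩ Set.Ioi 0, N ^ Q * ENNReal.ofReal t ^ (a - 1) := by
          rw [lintegral_indicator hmeas_ind, Measure.restrict_restrict hmeas_ind]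
      _ = ∫⁻ t in Set.Ioc (0:ℝ) T, N ^ Q * ENNReal.ofReal t ^ (a - 1) := by
          rw [Set.inter_eq_left.mpr Set.Ioc_subset_Ioi_self]
      _ = N ^ Q * ∫⁻ t in Set.Ioc (0:ℝ) T, ENNReal.ofReal t ^ (a - 1) := by
          rw [lintegral_const_mul]
          fun_prop
  -- compute the model integral
  have hK : (∫⁻ t in Set.Ioc (0:ℝ) T, ENNReal.ofReal t ^ (a - 1))
      = ENNReal.ofReal (T ^ a / a) := by
    have hcongr : (∫⁻ t in Set.Ioc (0:ℝ) T, ENNReal.ofReal t ^ (a - 1))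
        = ∫⁻ t in Set.Ioc (0:ℝ) T, ENNReal.ofReal (t ^ (a - 1)) := by
      refine setLIntegral_congr_fun hmeas_ind (fun t ht => ?_)
      exact ENNReal.ofReal_rpow_of_pos ht.1
    rw [hcongr]
    have hii : IntervalIntegrable (fun t : ℝ => t ^ (a - 1)) volume 0 T :=
      intervalIntegral.intervalIntegrable_rpow' (by linarith)
    have hInt : MeasureTheory.IntegrableOn (fun t : ℝ => t ^ (a - 1)) (Set.Ioc 0 T) volume :=
      (intervalIntegrable_iff_integrableOn_Ioc_of_le hT0).mp hii
    rw [← MeasureTheory.ofReal_integral_eq_lintegral_ofReal hInt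
      ((ae_restrict_iff' hmeas_ind).mpr (ae_of_all _ fun t ht =>
        Real.rpow_nonneg ht.1.le _))]
    congr 1
    rw [← intervalIntegral.integral_of_le hT0,
      integral_rpow (Or.inl (by linarith : (-1:ℝ) < a - 1))]
    rw [sub_add_cancel, Real.zero_rpow ha.ne', sub_zero]
  -- combine
  calc (∫⁻ t in Set.Ioi (0:ℝ),
      (ENNReal.ofReal t ^ r * rearr μ f (ENNReal.ofReal t)) ^ Q / ENNReal.ofReal t) ^ Q⁻¹
      ≤ (N ^ Q * ENNReal.ofReal (T ^ a / a)) ^ Q⁻¹ := by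
        rw [← hK]
        exact ENNReal.rpow_le_rpow hint_le (by positivity)
    _ = ENNReal.ofReal (1 / a) ^ Q⁻¹ * (N * m ^ (r - 1)) := by
        have hsplit : ENNReal.ofReal (T ^ a / a)
            = m ^ a * ENNReal.ofReal (1 / a) := by
          rw [div_eq_mul_one_div, ENNReal.ofReal_mul (by positivity),
            ← ENNReal.ofReal_rpow_of_nonneg hT0 ha.le]
          congr 2
          rw [hT, ENNReal.ofReal_toReal hm]
        rw [hsplit, ← mul_assoc, ENNReal.mul_rpow_of_nonneg _ _ (by positivity),
          ENNReal.mul_rpow_of_nonneg _ _ (by positivity)]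
        rw [← ENNReal.rpow_mul, ← ENNReal.rpow_mul,
          mul_inv_cancel₀ hQ.ne', ENNReal.rpow_one,
          show a * Q⁻¹ = r - 1 by rw [hadef, mul_assoc, mul_inv_cancel₀ hQ.ne', mul_one]]
        ring

end Aux

/-- On a non-atomic finite measure space of positive measure,
for any `p ∈ (0,1)` and `q ∈ (0,∞]`, the almost-compact embedding `L¹ ↪* L^{p,q}` holds. -/
theorem l1_almost_compact_into_lorentz
    {R : Type*} [MeasurableSpace R] (μ : Measure R)
    (hna : NonAtomic μ) (hpos : 0 < μ Set.univ) (hfin : μ Set.univ < ⊤)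
    (p q : ℝ≥0∞) (hp0 : 0 < p) (hp1 : p < 1) (hq : 0 < q) :
    AlmostCompactEmbedding μ (fun f => ∫⁻ x, ENNReal.ofReal |f x| ∂μ)
      (lorentzNorm μ p q) := by
  obtain ⟨C, hC, hbound⟩ := lorentz_main_bound μ p q hp0 hp1 hq
  set r : ℝ := (p⁻¹).toReal with hrdef
  have hpinv_ne_top : p⁻¹ ≠ ⊤ := by
    simpa [ENNReal.inv_eq_top] using hp0.ne'
  have hr1 : 1 < r := by
    have h1 : (1 : ℝ≥0∞) < p⁻¹ := ENNReal.one_lt_inv.mpr hp1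
    have := (ENNReal.toReal_lt_toReal ENNReal.one_ne_top hpinv_ne_top).mpr h1
    simpa [hrdef, ENNReal.toReal_inv] using this
  constructor
  · intro f hf hNfin
    refine lt_of_le_of_lt (hbound f hf _ (μ Set.univ) hfin.ne le_rfl
      (fun lam => measure_mono (Set.subset_univ _))) ?_
    exact ENNReal.mul_lt_top hC.lt_top (ENNReal.mul_lt_top hNfin
      (ENNReal.rpow_lt_top_of_nonneg (by linarith) hfin.ne))
  · intro E hE hae
    -- μ (E n) → 0
    have hμE : Tendsto (fun n => μ (E n)) atTop (nhds 0) := by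
      have heq : ∀ n, μ (E n) = ∫⁻ x, (E n).indicator (fun _ => (1:ℝ≥0∞)) x ∂μ := by
        intro n
        rw [lintegral_indicator (hE n), setLIntegral_one]
      simp only [heq]
      have h0 : (0:ℝ≥0∞) = ∫⁻ _x, (0:ℝ≥0∞) ∂μ := by simp
      rw [h0]
      refine tendsto_lintegral_of_dominated_convergence (fun _ => 1)
        (fun n => (measurable_const.indicator (hE n))) (fun n => ae_of_all _ fun x => ?_)
        (by simpa using hfin.ne) ?_
      · by_cases hx : x ∈ E n <;> simp [hx]
      · filter_upwards [hae] with x hx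
        have hev : ∀ᶠ n in atTop, x ∉ E n := by
          have := hx (Iio_mem_nhds (by norm_num : (0:ℝ) < 1))
          filter_upwards [this] with n hn hmem
          have h1 : (E n).indicator (fun _ => (1:ℝ)) x < 1 := hn
          rw [Set.indicator_of_mem hmem] at h1
          exact lt_irrefl _ h1
        refine Tendsto.congr' ?_ tendsto_const_nhds
        filter_upwards [hev] with n hn
        simp [Set.indicator_of_notMem hn]
    have hupper : Tendsto (fun n => C * (μ (E n)) ^ (r - 1)) atTop (nhds 0) := by
      have := (ENNReal.tendsto_const_mul_rpow_nhds_zero_of_pos hC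
        (by linarith : (0:ℝ) < r - 1)).comp hμE
      exact this
    refine tendsto_of_tendsto_of_tendsto_of_le_of_le tendsto_const_nhds hupper
      (fun n => zero_le) (fun n => ?_)
    refine iSup_le fun f => ?_
    have hNf : (∫⁻ x, ENNReal.ofReal |(E n).indicator f.1 x| ∂μ) ≤ 1 := by
      refine le_trans (lintegral_mono fun x => ENNReal.ofReal_le_ofReal ?_) f.2.2
      by_cases hx : x ∈ E n
      · simp [Set.indicator_of_mem hx]
      · simp [Set.indicator_of_notMem hx, abs_nonneg]
    have hdist : ∀ lam, distFn μ ((E n).indicator f.1) lam ≤ μ (E n) := by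
      intro lam
      refine measure_mono fun x hx => ?_
      by_contra hxE
      rw [Set.mem_setOf_eq, Set.indicator_of_notMem hxE] at hx
      simp at hx
    have := hbound ((E n).indicator f.1) (f.2.1.indicator (hE n)) 1 (μ (E n))
      ((measure_mono (Set.subset_univ _)).trans_lt hfin).ne hNf hdist
    rw [one_mul] at this
    exact this
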